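/- Let B be a ℚ-algebra which is an integral domain, D a locally nilpotent derivation of B with kernel A, and s ∈ B a slice (Ds = 1). Then s is transcendental over A and B ≅ A[X], a polynomial ring in one variable over A, via X ↦ s. -/

import Mathlib

/-- The kernel of a derivation, as a subring. -/
def derivationKernel {B : Type*} [CommRing B] [Algebra ℚ B] (D : Derivation ℚ B B) :
    Subring B where
  carrier := {b : B | D b = 0}
  one_mem' := by simp
  mul_mem' := by
    intro a b ha hb
    simp only [Set.mem_setOf_eq] at ha hb ⊢
    simp [Derivation.leibniz, ha, hb]
  zero_mem' := by simp
  add_mem' := by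
    intro a b ha hb
    simp only [Set.mem_setOf_eq] at ha hb ⊢
    simp [ha, hb]
  neg_mem' := by
    intro a ha
    simp only [Set.mem_setOf_eq] at ha ⊢
    simp [ha]

open Polynomial

section aux
variable {B : Type*} [CommRing B] [IsDomain B] [Algebra ℚ B]
  (D : Derivation ℚ B B) (s : B)

lemma mem_dk {b : B} (h : D b = 0) : b ∈ derivationKernel D := h

lemma dk_apply (a : derivationKernel D) : D (a : B) = 0 := a.2

noncomputable def sliceHom : Polynomial (derivationKernel D) →+* B :=
  Polynomial.eval₂RingHom (derivationKernel D).subtype s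

lemma sliceHom_D (hs : D s = 1) (p : Polynomial (derivationKernel D)) :
    D (sliceHom D s p) = sliceHom D s (derivative p) := by
  induction p using Polynomial.induction_on with
  | C a => simp [sliceHom, dk_apply]
  | add p q hp hq => simp [map_add, hp, hq]
  | monomial n a ih =>
    simp only [sliceHom, coe_eval₂RingHom, eval₂_mul, eval₂_C, eval₂_X_pow,
      derivative_C_mul_X_pow, Derivation.leibniz, Derivation.leibniz_pow, hs, dk_apply,
      Subring.coe_subtype, smul_eq_mul, mul_one, mul_zero, add_zero, zero_mul, smul_zero]
    push_cast
    ring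
end aux

section aux2
variable {B : Type*} [CommRing B] [IsDomain B] [Algebra ℚ B]
  (D : Derivation ℚ B B) (s : B)

lemma sliceHom_ne_zero (hs : D s = 1) :
    ∀ p : Polynomial (derivationKernel D), p ≠ 0 → sliceHom D s p ≠ 0 := by
  have hB : CharZero B := charZero_of_injective_algebraMap (algebraMap ℚ B).injective
  have key : ∀ n : ℕ, ∀ p : Polynomial (derivationKernel D), p.natDegree = n → p ≠ 0 →
      sliceHom D s p ≠ 0 := by
    intro n
    induction n using Nat.strong_induction_on with
    | _ n ih =>
      intro p hdeg hp h0
      rcases Nat.eq_zero_or_pos n with h | h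
      · subst h
        obtain ⟨a, rfl⟩ := Polynomial.natDegree_eq_zero.mp hdeg
        have : (a : B) = 0 := by simpa [sliceHom] using h0
        exact hp (by simp [show a = 0 from Subtype.ext this])
      · have hd : derivative p ≠ 0 := by
          intro hc
          have := Polynomial.natDegree_eq_zero_of_derivative_eq_zero hc
          omega
        have hlt : (derivative p).natDegree < n := by
          have := Polynomial.natDegree_derivative_lt (p := p) (by omega)
          omega
        exact ih _ hlt _ rfl hd (by rw [← sliceHom_D D s hs, h0, map_zero])
  intro p hp
  exact key p.natDegree p rfl hp

end aux2

section aux3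
variable {B : Type*} [CommRing B] [IsDomain B] [Algebra ℚ B]
  (D : Derivation ℚ B B) (s : B)

noncomputable def cInv (k : ℕ) : derivationKernel D :=
  ⟨algebraMap ℚ B (((k : ℚ) + 1)⁻¹), D.map_algebraMap _⟩

lemma cInv_spec (k : ℕ) : ((k : derivationKernel D) + 1) * cInv D k = 1 := by
  apply Subtype.ext
  push_cast [cInv]
  rw [show ((k : B) + 1) = algebraMap ℚ B ((k : ℚ) + 1) by push_cast; ring,
    ← map_mul, mul_inv_cancel₀ (by positivity), map_one]

lemma antideriv (q : Polynomial (derivationKernel D)) :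
    ∃ Q : Polynomial (derivationKernel D), derivative Q = q := by
  refine ⟨q.sum fun k a => C (cInv D k * a) * X ^ (k + 1), ?_⟩
  rw [Polynomial.sum, map_sum]
  conv_rhs => rw [← Polynomial.sum_C_mul_X_pow_eq q]
  rw [Polynomial.sum]
  apply Finset.sum_congr rfl
  intro k _
  rw [derivative_C_mul_X_pow, Nat.add_sub_cancel]
  congr 1
  exact congrArg C (by push_cast; linear_combination q.coeff k * cInv_spec D k)

lemma sliceHom_surj (hs : D s = 1) (hLND : ∀ b : B, ∃ n : ℕ, (⇑D)^[n] b = 0) :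
    Function.Surjective (sliceHom D s) := by
  have key : ∀ n : ℕ, ∀ b : B, (⇑D)^[n] b = 0 → ∃ p, sliceHom D s p = b := by
    intro n
    induction n with
    | zero => intro b hb; exact ⟨0, by simp at hb; simp [hb, sliceHom]⟩
    | succ n ih =>
      intro b hb
      obtain ⟨q, hq⟩ := ih (D b) (by rwa [← Function.iterate_succ_apply])
      obtain ⟨Q, hQ⟩ := antideriv D q
      have hmem : b - sliceHom D s Q ∈ derivationKernel D := by
        show D _ = 0
        rw [map_sub, sliceHom_D D s hs, hQ, hq, sub_self]
      refine ⟨Q + C ⟨b - sliceHom D s Q, hmem⟩, ?_⟩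
      simp only [map_add, sliceHom, coe_eval₂RingHom, eval₂_C]
      show _ + (b - _) = b
      ring
  intro b
  obtain ⟨n, hn⟩ := hLND b
  exact key n b hn

end aux3



/-- (Slice theorem.) If `B` is a `ℚ`-algebra which is an integral domain, `D` a locally
nilpotent derivation of `B` with kernel `A`, and `s` a slice (`D s = 1`), then `s` is
transcendental over `A` and `B ≅ A[X]` via `X ↦ s`. -/
theorem stmt5 {B : Type*} [CommRing B] [IsDomain B] [Algebra ℚ B]
    (D : Derivation ℚ B B)
    (hLND : ∀ b : B, ∃ n : ℕ, (⇑D)^[n] b = 0)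
    (s : B) (hs : D s = 1) :
    (∀ p : Polynomial (derivationKernel D), p ≠ 0 →
        Polynomial.eval₂ (derivationKernel D).subtype s p ≠ 0) ∧
    (∃ e : Polynomial (derivationKernel D) ≃+* B,
        e Polynomial.X = s ∧ ∀ a : derivationKernel D, e (Polynomial.C a) = ↑a) := by
  have hne := sliceHom_ne_zero D s hs
  constructor
  · intro p hp
    simpa [sliceHom] using hne p hp
  · have hinj : Function.Injective (sliceHom D s) := by
      intro p q h
      by_contra hpq
      exact hne (p - q) (sub_ne_zero.mpr hpq) (by rw [map_sub, h, sub_self])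
    refine ⟨RingEquiv.ofBijective (sliceHom D s) ⟨hinj, sliceHom_surj D s hs hLND⟩, ?_, ?_⟩
    · show sliceHom D s X = s
      simp [sliceHom]
    · intro a
      show sliceHom D s (C a) = a
      simp [sliceHom]
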